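/- Let κ = 3. (a) For every configuration X_0 : ℤ → ℤ/3ℤ, every integer x', and every n ≥ 0, the walk 𝒮_n defined from X_0 with starting value x' satisfies X_0(n) − X_0(0) ≡ 𝒮_n − 𝒮_0 (mod 3). (b) For fixed i, j ∈ ℤ/3ℤ and a fixed integer x ≥ 0, one has Q^{ij}(x,t) = P(𝒮_1 ≥ 0, 𝒮_2 ≥ 0, …, 𝒮_t ≥ 0) for all t ≥ 0 (in the same i.i.d. setup defining Q^{ij}, but with 𝒮_n in place of 𝒮'_n) if and only if x is not congruent to j modulo 3. -/

import Mathlib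

noncomputable section

namespace FCA3

/-- The representative of an element of `ℤ/3ℤ` in `{-1, 0, 1}`. -/
def rep3 (a : ZMod 3) : ℤ := if a = 0 then 0 else if a = 1 then 1 else -1

/-- The triple of colors around site `x`. -/
def vec (X : ℤ → ZMod 3) (x : ℤ) : ZMod 3 × ZMod 3 × ZMod 3 := (X (x - 1), X x, X (x + 1))

/-- The modified configuration `X₀'`, in which every flipping triple `120` or `021`
centered at `x` is replaced by color `1` at `x`. -/
def modify (X : ℤ → ZMod 3) : ℤ → ZMod 3 := fun x =>
  if vec X x = ((1 : ZMod 3), (2 : ZMod 3), (0 : ZMod 3)) ∨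
     vec X x = ((0 : ZMod 3), (2 : ZMod 3), (1 : ZMod 3)) then 1 else X x

/-- The functional `g : (ℤ/3ℤ)³ → {-2,…,2}`, with `g(1,2,0) = -2`, `g(0,2,1) = 2`, and
otherwise the representative of `k - j (mod 3)` in `{-1,0,1}`. -/
def g3 : ZMod 3 × ZMod 3 × ZMod 3 → ℤ := fun p =>
  if p = ((1 : ZMod 3), (2 : ZMod 3), (0 : ZMod 3)) then -2
  else if p = ((0 : ZMod 3), (2 : ZMod 3), (1 : ZMod 3)) then 2
  else rep3 (p.2.2 - p.2.1)

/-- The walk `S'_n = x' + Σ_{i=0}^{n-1} dX₀'(i, i+1)`. -/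
def S' (X : ℤ → ZMod 3) (x' : ℤ) (n : ℕ) : ℤ :=
  x' + ∑ i ∈ Finset.range n, rep3 (modify X ((i : ℤ) + 1) - modify X (i : ℤ))

/-- The starting value `𝒮₀ = x' + 1{X⃗₀(0) = (1,2,0)} - 2·1{X⃗₀(0) = (0,2,1)}`. -/
def S0 (X : ℤ → ZMod 3) (x' : ℤ) : ℤ :=
  x' + (if vec X 0 = ((1 : ZMod 3), (2 : ZMod 3), (0 : ZMod 3)) then 1 else 0) -
    (if vec X 0 = ((0 : ZMod 3), (2 : ZMod 3), (1 : ZMod 3)) then 2 else 0)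

/-- The walk `𝒮_n = 𝒮₀ + Σ_{i=0}^{n-1} g(X⃗₀(i))`. -/
def Scal (X : ℤ → ZMod 3) (x' : ℤ) (n : ℕ) : ℤ :=
  S0 X x' + ∑ i ∈ Finset.range n, g3 (vec X (i : ℤ))

/-- The adjusted walk `𝒮'_n = 𝒮_n + 1{𝒮_n = -1 and X⃗₀(n) = (0,2,1)}`. -/
def Scal' (X : ℤ → ZMod 3) (x' : ℤ) (n : ℕ) : ℤ :=
  Scal X x' n +
    (if Scal X x' n = -1 ∧ vec X (n : ℤ) = ((0 : ZMod 3), (2 : ZMod 3), (1 : ZMod 3))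
     then 1 else 0)

end FCA3

open FCA3

namespace FCA3

instance (n : ℕ) : MeasurableSpace (ZMod n) := ⊤

/-- The random environment with `X₀(-1) = i`, `X₀(0) = j` fixed and the remaining
colors given by `ω`. -/
def env (i j : ZMod 3) (ω : ℤ → ZMod 3) : ℤ → ZMod 3 := fun k =>
  if k = -1 then i else if k = 0 then j else ω k

/-- The walk `𝒮_n = x + Σ_{m=0}^{n-1} g(X₀(m-1), X₀(m), X₀(m+1))` in the conditioned
environment. -/
def QS (i j : ZMod 3) (x : ℤ) (ω : ℤ → ZMod 3) (n : ℕ) : ℤ :=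
  x + ∑ m ∈ Finset.range n, g3 (vec (env i j ω) (m : ℤ))

/-- The adjusted walk `𝒮'_n = 𝒮_n + 1{𝒮_n = -1 and X⃗₀(n) = (0,2,1)}` in the conditioned
environment. -/
def QS' (i j : ZMod 3) (x : ℤ) (ω : ℤ → ZMod 3) (n : ℕ) : ℤ :=
  QS i j x ω n +
    (if QS i j x ω n = -1 ∧
        vec (env i j ω) (n : ℤ) = ((0 : ZMod 3), (2 : ZMod 3), (1 : ZMod 3))
     then 1 else 0)

/-- The survival probability `Q^{ij}(x,t)` (as a real number). -/
def Qsurv (μ : MeasureTheory.Measure (ℤ → ZMod 3)) (i j : ZMod 3) (x : ℤ) (t : ℕ) : ℝ :=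
  (μ {ω : ℤ → ZMod 3 | ∀ n ∈ Finset.Icc 1 t, 0 ≤ QS' i j x ω n}).toReal

end FCA3

open MeasureTheory

namespace FCA3

-- AUX
lemma g3_cast (p : ZMod 3 × ZMod 3 × ZMod 3) : ((g3 p : ℤ) : ZMod 3) = p.2.2 - p.2.1 := by
  revert p; decide

lemma tele (X : ℤ → ZMod 3) (n : ℕ) :
    ((∑ m ∈ Finset.range n, g3 (vec X (m : ℤ)) : ℤ) : ZMod 3) = X (n : ℤ) - X 0 := by
  induction n with
  | zero => simp
  | succ k ih =>
    have hk : ((k+1:ℕ):ℤ) = (k:ℤ)+1 := by push_cast; ring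
    rw [Finset.sum_range_succ, Int.cast_add, ih, g3_cast, hk]
    show X (k:ℤ) - X 0 + (X ((k:ℤ)+1) - X (k:ℤ)) = _
    ring

lemma QS_cast (i j : ZMod 3) (x : ℤ) (ω : ℤ → ZMod 3) (n : ℕ) :
    ((QS i j x ω n : ℤ) : ZMod 3) = (x : ZMod 3) + env i j ω (n : ℤ) - j := by
  have h0 : env i j ω 0 = j := by norm_num [env]
  unfold QS
  rw [Int.cast_add, tele, h0]; ring

lemma QS_le_QS' (i j : ZMod 3) (x : ℤ) (ω : ℤ → ZMod 3) (n : ℕ) :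
    QS i j x ω n ≤ QS' i j x ω n := by
  unfold QS'; split <;> omega

def stepP (ab : ZMod 3 × ZMod 3) : ZMod 3 := if ab.1 = 0 ∧ ab.2 = 2 then ab.2 else ab.2 - 1
def decP (ab : ZMod 3 × ZMod 3) : ℕ := if ab.1 = 0 ∧ ab.2 = 2 then 0 else 1

lemma g3_step (ab : ZMod 3 × ZMod 3) : g3 (ab.1, ab.2, stepP ab) = -(decP ab : ℤ) := by
  revert ab; decide
lemma dec_succ (ab : ZMod 3 × ZMod 3) (h : decP ab = 0) : decP (ab.2, stepP ab) = 1 := by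
  revert h; revert ab; decide
lemma step_eq (ab : ZMod 3 × ZMod 3) : stepP ab = ab.2 - ((decP ab : ℕ) : ZMod 3) := by
  revert ab; decide
lemma decP_le (ab : ZMod 3 × ZMod 3) : decP ab ≤ 1 := by unfold decP; split <;> omega

def Y (i j : ZMod 3) : ℕ → ZMod 3 × ZMod 3
  | 0 => (i, j)
  | m + 1 => ((Y i j m).2, stepP (Y i j m))

def D (i j : ZMod 3) (k : ℕ) : ℕ := ∑ m ∈ Finset.range k, decP (Y i j m)

lemma D_succ (i j : ZMod 3) (m : ℕ) : D i j (m+1) = D i j m + decP (Y i j m) :=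
  Finset.sum_range_succ _ _

lemma D_growth (i j : ZMod 3) (k : ℕ) : k ≤ D i j (2*k) := by
  induction k with
  | zero => simp
  | succ k ih =>
    have h1 : D i j (2*(k+1)) = D i j (2*k) + decP (Y i j (2*k)) + decP (Y i j (2*k+1)) := by
      rw [show 2*(k+1) = (2*k)+1+1 by ring, D_succ, D_succ]
    have h2 : 1 ≤ decP (Y i j (2*k)) + decP (Y i j (2*k+1)) := by
      by_cases h : decP (Y i j (2*k)) = 0
      · have := dec_succ _ h
        rw [show Y i j (2*k+1) = ((Y i j (2*k)).2, stepP (Y i j (2*k))) from rfl]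
        omega
      · omega
    omega

lemma Y2_eq (i j : ZMod 3) (m : ℕ) : (Y i j m).2 = j - ((D i j m : ℕ) : ZMod 3) := by
  induction m with
  | zero => simp [Y, D]
  | succ k ih =>
    show stepP (Y i j k) = _
    rw [step_eq, ih, D_succ]
    push_cast
    ring

end FCA3


/-- (a) `X₀(n) - X₀(0) ≡ 𝒮_n - 𝒮₀ (mod 3)` for all `n ≥ 0`.
(b) For fixed `i, j` and fixed `x ≥ 0`, the survival probabilities of `𝒮'` and of `𝒮`
coincide for all `t ≥ 0` if and only if `x` is not congruent to `j` modulo 3. -/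
theorem walk_mod3_and_survival
    (μ : Measure (ℤ → ZMod 3)) [IsProbabilityMeasure μ]
    (hμ : ∀ (s : Finset ℤ) (f : ℤ → ZMod 3),
      μ {X : ℤ → ZMod 3 | ∀ k ∈ s, X k = f k} = (3 : ENNReal)⁻¹ ^ s.card) :
    (∀ (X : ℤ → ZMod 3) (x' : ℤ) (n : ℕ),
      X (n : ℤ) - X 0 = ((Scal X x' n - Scal X x' 0 : ℤ) : ZMod 3)) ∧
    (∀ (i j : ZMod 3) (x : ℤ), 0 ≤ x →
      ((∀ t : ℕ,
          μ {ω : ℤ → ZMod 3 | ∀ n ∈ Finset.Icc 1 t, 0 ≤ QS' i j x ω n} =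
            μ {ω : ℤ → ZMod 3 | ∀ n ∈ Finset.Icc 1 t, 0 ≤ QS i j x ω n}) ↔
        (x : ZMod 3) ≠ j)) := by
  refine ⟨?_, ?_⟩
  · intro X x' n
    have h : Scal X x' n - Scal X x' 0 = ∑ m ∈ Finset.range n, g3 (vec X (m:ℤ)) := by
      simp [Scal]
    rw [h]
    exact (tele X n).symm
  · intro i j x hx
    constructor
    · -- forward: survival equality for all t implies x ≢ j
      intro heq hxj
      -- hxj : (x : ZMod 3) = j ; derive False
      set N := x.toNat with hNdef
      have hNx : (N : ℤ) = x := Int.toNat_of_nonneg hx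
      have hNj : ((N : ℕ) : ZMod 3) = j := by
        rw [← hxj, ← hNx]; push_cast; ring
      have hex : ∃ k, N + 1 ≤ D i j k := ⟨2*(N+1), D_growth i j (N+1)⟩
      set n := Nat.find hex with hn
      have hspec : N + 1 ≤ D i j n := Nat.find_spec hex
      have hmin : ∀ k, k < n → D i j k ≤ N := by
        intro k hk
        have := Nat.find_min hex hk
        omega
      have hn1 : 1 ≤ n := by
        rcases Nat.eq_zero_or_pos n with h0 | h
        · rw [h0] at hspec; simp [D] at hspec
        · exact h
      obtain ⟨p, hp⟩ : ∃ p, n = p + 1 := ⟨n - 1, by omega⟩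
      have hDsp : D i j n = D i j p + decP (Y i j p) := by rw [hp]; exact D_succ i j p
      have hDp' : D i j p ≤ N := hmin p (by omega)
      have hdle := decP_le (Y i j p)
      have hDn1 : D i j n = N + 1 := by omega
      have hDpN : D i j p = N := by omega
      have hyn : (Y i j n).2 = 2 := by
        rw [Y2_eq i j n, hDn1]
        push_cast [hNj]
        have : ∀ a : ZMod 3, a - (a + 1) = 2 := by decide
        exact this j
      have hyp2 : (Y i j p).2 = 0 := by
        rw [Y2_eq i j p, hDpN, hNj, sub_self]
      have hyn1 : (Y i j n).1 = 0 := by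
        rw [hp]; show (Y i j p).2 = 0; exact hyp2
      -- the cylinder
      set f : ℤ → ZMod 3 := fun k => if k = (n:ℤ)+1 then 1 else (Y i j k.toNat).2 with hf
      set s : Finset ℤ := Finset.Icc (1:ℤ) ((n:ℤ)+1) with hs
      set C : Set (ℤ → ZMod 3) := {ω : ℤ → ZMod 3 | ∀ k ∈ s, ω k = f k} with hCdef
      have hcard : s.card = n + 1 := by
        rw [hs, Int.card_Icc]; omega
      have hC : μ C = (3:ENNReal)⁻¹ ^ (n+1) := by rw [← hcard]; exact hμ s f
      -- key properties for ω in the cylinder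
      have key : ∀ ω ∈ C, (∀ k ∈ Finset.Icc 1 n, 0 ≤ QS' i j x ω k) ∧ QS i j x ω n = -1 := by
        intro ω hω
        have hE0 : env i j ω 0 = j := by norm_num [env]
        have hEneg : env i j ω (-1) = i := by norm_num [env]
        have hEm : ∀ m : ℕ, 1 ≤ m → m ≤ n → env i j ω (m:ℤ) = (Y i j m).2 := by
          intro m h1 h2
          have hk : (m:ℤ) ∈ s := by rw [hs, Finset.mem_Icc]; omega
          have he : env i j ω (m:ℤ) = ω (m:ℤ) := by
            simp [env, show (m:ℤ) ≠ -1 by omega, show (m:ℤ) ≠ 0 by omega, show m ≠ 0 by omega]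
          rw [he, hω _ hk, hf]
          simp [show (m:ℤ) ≠ (n:ℤ)+1 by omega]
        have hEall : ∀ m : ℕ, m ≤ n → env i j ω (m:ℤ) = (Y i j m).2 := by
          intro m hm
          rcases Nat.eq_zero_or_pos m with h0 | h
          · rw [h0]; exact hE0
          · exact hEm m h hm
        have hEn1 : env i j ω ((n:ℤ)+1) = 1 := by
          have hk : ((n:ℤ)+1) ∈ s := by rw [hs, Finset.mem_Icc]; omega
          have he : env i j ω ((n:ℤ)+1) = ω ((n:ℤ)+1) := by
            simp [env, show ((n:ℤ)+1) ≠ -1 by omega, show ((n:ℤ)+1) ≠ 0 by omega]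
          rw [he, hω _ hk, hf]; simp
        have hvec : ∀ m : ℕ, m < n →
            vec (env i j ω) (m:ℤ) = ((Y i j m).1, (Y i j m).2, stepP (Y i j m)) := by
          intro m hm
          have h2 : env i j ω (m:ℤ) = (Y i j m).2 := hEall m (by omega)
          have h3 : env i j ω ((m:ℤ)+1) = stepP (Y i j m) := by
            have := hEall (m+1) (by omega)
            push_cast at this
            rw [this]; rfl
          have h1 : env i j ω ((m:ℤ)-1) = (Y i j m).1 := by
            cases m with
            | zero => simpa [Y] using hEneg
            | succ q =>
              have := hEall q (by omega)
              have hq : ((q+1:ℕ):ℤ) - 1 = (q:ℤ) := by push_cast; ring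
              rw [hq, this]; rfl
          rw [vec, h1, h2, h3]
        have hQS : ∀ k, k ≤ n → QS i j x ω k = x - (D i j k : ℤ) := by
          intro k hk
          unfold QS
          have hcong : ∀ m ∈ Finset.range k, g3 (vec (env i j ω) (m:ℤ)) = -((decP (Y i j m) : ℕ) : ℤ) := by
            intro m hm
            rw [hvec m (by rw [Finset.mem_range] at hm; omega)]
            exact g3_step _
          rw [Finset.sum_congr rfl hcong, Finset.sum_neg_distrib]
          rw [show ∑ m ∈ Finset.range k, ((decP (Y i j m) : ℕ) : ℤ) = ((D i j k : ℕ) : ℤ) by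
            rw [D]; push_cast; ring]
          ring
        have hQSn : QS i j x ω n = -1 := by
          rw [hQS n le_rfl, hDn1]; push_cast; omega
        have hvecn : vec (env i j ω) (n:ℤ) = ((0:ZMod 3), (2:ZMod 3), (1:ZMod 3)) := by
          have h2 : env i j ω (n:ℤ) = 2 := by rw [hEall n le_rfl, hyn]
          have h1 : env i j ω ((n:ℤ)-1) = 0 := by
            have := hEall p (by omega)
            have hq : (n:ℤ) - 1 = (p:ℤ) := by rw [hp]; push_cast; ring
            rw [hq, this, hyp2]
          rw [vec, h1, h2, hEn1]
        have hQS'n : QS' i j x ω n = 0 := by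
          rw [QS', hQSn, if_pos ⟨rfl, hvecn⟩]; ring
        refine ⟨?_, hQSn⟩
        intro k hk
        rw [Finset.mem_Icc] at hk
        rcases eq_or_lt_of_le hk.2 with hkn | hkn
        · rw [hkn, hQS'n]
        · have h1 : 0 ≤ QS i j x ω k := by
            rw [hQS k (by omega)]
            have := hmin k hkn
            omega
          exact le_trans h1 (QS_le_QS' i j x ω k)
      -- measurability of the cylinder
      have hmC : MeasurableSet C := by
        have hCeq : C = ⋂ k ∈ s, {ω : ℤ → ZMod 3 | ω k = f k} := by
          ext ω; simp [hCdef]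
        rw [hCeq]
        refine s.measurableSet_biInter (fun k _ => ?_)
        show MeasurableSet ((fun ω : ℤ → ZMod 3 => ω k) ⁻¹' {f k})
        exact (measurable_pi_apply k) (MeasurableSpace.measurableSet_top)
      -- contradiction
      set A : Set (ℤ → ZMod 3) := {ω | ∀ k ∈ Finset.Icc 1 n, 0 ≤ QS i j x ω k} with hA
      set A' : Set (ℤ → ZMod 3) := {ω | ∀ k ∈ Finset.Icc 1 n, 0 ≤ QS' i j x ω k} with hA'
      have hdisj : Disjoint A C := by
        rw [Set.disjoint_left]
        intro ω hωA hωC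
        have h1 := (key ω hωC).2
        have h2 := hωA n (by rw [Finset.mem_Icc]; omega)
        omega
      have hsubA : A ⊆ A' := by
        intro ω hω k hk
        exact le_trans (hω k hk) (QS_le_QS' i j x ω k)
      have hsubC : C ⊆ A' := fun ω hω => (key ω hω).1
      have hle : μ A + μ C ≤ μ A := by
        calc μ A + μ C = μ (A ∪ C) := (measure_union hdisj hmC).symm
          _ ≤ μ A' := measure_mono (Set.union_subset hsubA hsubC)
          _ = μ A := heq n
      have hC0 : μ C = 0 := by
        have hfin : μ A ≠ ⊤ := measure_ne_top μ _
        have h2 : μ A + μ C ≤ μ A + 0 := by simpa using hle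
        have := (ENNReal.add_le_add_iff_left hfin).mp h2
        exact le_antisymm this (zero_le ..)
      rw [hC] at hC0
      have h3 : (3:ENNReal)⁻¹ ≠ 0 := ENNReal.inv_ne_zero.mpr (by norm_num)
      exact pow_ne_zero (n+1) h3 hC0
    · -- reverse: x ≢ j implies the walks coincide
      intro hxj t
      have hQQ : ∀ ω k, QS' i j x ω k = QS i j x ω k := by
        intro ω k
        rw [QS', if_neg, add_zero]
        rintro ⟨h1, h2⟩
        have hc := QS_cast i j x ω k
        rw [h1] at hc
        have h2' : env i j ω (k:ℤ) = 2 := by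
          have := congrArg (fun p => p.2.1) h2
          simpa [vec] using this
        rw [h2'] at hc
        apply hxj
        have hval : ∀ a b : ZMod 3, ((-1:ℤ):ZMod 3) = a + 2 - b → a = b := by decide
        exact hval _ _ hc
      have hset : {ω : ℤ → ZMod 3 | ∀ k ∈ Finset.Icc 1 t, 0 ≤ QS' i j x ω k} =
          {ω : ℤ → ZMod 3 | ∀ k ∈ Finset.Icc 1 t, 0 ≤ QS i j x ω k} := by
        ext ω; simp only [Set.mem_setOf_eq, hQQ]
      rw [hset]
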